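/- (Elliptical potential lemma.) Let λ > 0 and φ_1, …, φ_k ∈ ℝ^d with ‖φ_i‖ ≤ L_φ for all i, and for each i set Σ_i := λ·I + Σ_{j=1}^{i−1} φ_j φ_jᵀ. Then Σ_{i=1}^{k} min{1, ‖φ_i‖²_{Σ_i⁻¹}} ≤ 2·d·log((λ + k·L_φ²)/λ). -/

import Mathlib

open Matrix Finset

lemma min_le_two_log (x : ℝ) (hx : 0 ≤ x) : min 1 x ≤ 2 * Real.log (1 + x) := by
  have he : Real.exp (1/2) ≤ 2 := by
    nlinarith [Real.exp_pos (1/2), Real.exp_add (1/2) (1/2), Real.exp_one_lt_d9]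
  rcases le_total x 1 with h | h
  · rw [min_eq_right h]
    have hlog : x / 2 ≤ Real.log (1 + x) := by
      rw [Real.le_log_iff_exp_le (by linarith)]
      have hc := convexOn_exp.2 (Set.mem_univ (0:ℝ)) (Set.mem_univ (1/2:ℝ))
        (show (0:ℝ) ≤ 1 - x by linarith) hx (show (1-x) + x = 1 by ring)
      simp only [smul_eq_mul, mul_zero, zero_add, Real.exp_zero, mul_one] at hc
      have h2 : Real.exp (x * (1/2)) ≤ 1 - x + x * Real.exp (1/2) := hc
      have hxx : x / 2 = x * (1/2) := by ring
      rw [hxx]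
      nlinarith
    linarith
  · rw [min_eq_left h]
    have h1 : Real.log 2 ≤ Real.log (1+x) := Real.log_le_log (by norm_num) (by linarith)
    have h2 : (1:ℝ)/2 ≤ Real.log 2 := by
      rw [Real.le_log_iff_exp_le (by norm_num)]; exact he
    linarith

lemma quad_vmv (d : ℕ) (v x : Fin d → ℝ) :
    x ⬝ᵥ (Matrix.vecMulVec v v *ᵥ x) = (v ⬝ᵥ x) ^ 2 := by
  simp only [dotProduct, mulVec, vecMulVec_apply, sq, Finset.mul_sum, Finset.sum_mul]
  rw [Finset.sum_comm]
  apply Finset.sum_congr rfl; intro i _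
  apply Finset.sum_congr rfl; intro j _
  ring

lemma psd_sum (d : ℕ) (s : Finset ℕ) (φ : ℕ → Fin d → ℝ) :
    (∑ j ∈ s, Matrix.vecMulVec (φ j) (φ j)).PosSemidef := by
  apply Finset.sum_induction (fun j => Matrix.vecMulVec (φ j) (φ j)) Matrix.PosSemidef
    (fun a b ha hb => ha.add hb) Matrix.PosSemidef.zero
  intro j _
  rw [Matrix.vecMulVec_eq (Fin 1)]
  have := Matrix.posSemidef_conjTranspose_mul_self (Matrix.replicateRow (Fin 1) (φ j))
  simp at this
  exact this

lemma det_lemma (d : ℕ) (A : Matrix (Fin d) (Fin d) ℝ) (hA : IsUnit A.det) (u : Fin d → ℝ) :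
    (A + Matrix.vecMulVec u u).det = A.det * (1 + u ⬝ᵥ (A⁻¹ *ᵥ u)) := by
  rw [Matrix.vecMulVec_eq (Fin 1), Matrix.det_add_replicateCol_mul_replicateRow hA]
  congr 1
  have key : ∀ (i1 : DecidableEq (Fin 1)) (i2 : Fintype (Fin 1)) (M : Matrix (Fin 1) (Fin 1) ℝ),
      @Matrix.det (Fin 1) i1 i2 ℝ _ M = M 0 0 := by
    intro i1 i2 M
    rw [Subsingleton.elim i1 (instDecidableEqFin 1), Subsingleton.elim i2 (Fin.fintype 1)]
    exact Matrix.det_fin_one M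
  rw [key]
  simp only [Matrix.add_apply, Matrix.one_apply_eq]
  congr 1
  simp only [Matrix.mul_apply, Matrix.replicateRow_apply, Matrix.replicateCol_apply, dotProduct, Matrix.mulVec,
    dotProduct, Finset.sum_mul, Finset.mul_sum]
  rw [Finset.sum_comm]
  apply Finset.sum_congr rfl; intro i _
  apply Finset.sum_congr rfl; intro j _
  ring

theorem elliptical_potential_lemma
    (d k : ℕ) (lam : ℝ) (hlam : 0 < lam) (Lφ : ℝ)
    (φ : ℕ → (Fin d → ℝ))
    (hφ : ∀ i ∈ Finset.Icc 1 k, Real.sqrt (φ i ⬝ᵥ φ i) ≤ Lφ)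
    (Sig : ℕ → Matrix (Fin d) (Fin d) ℝ)
    (hSig : ∀ i, Sig i = lam • (1 : Matrix (Fin d) (Fin d) ℝ) +
      ∑ j ∈ Finset.Icc 1 (i - 1), Matrix.vecMulVec (φ j) (φ j)) :
    ∑ i ∈ Finset.Icc 1 k, min 1 (φ i ⬝ᵥ ((Sig i)⁻¹ *ᵥ φ i)) ≤
      2 * d * Real.log ((lam + k * Lφ ^ 2) / lam) := by
  -- basic positivity
  have hdp : ∀ v : Fin d → ℝ, 0 ≤ v ⬝ᵥ v := fun v =>
    Finset.sum_nonneg fun i _ => mul_self_nonneg _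
  have hL2 : ∀ i ∈ Finset.Icc 1 k, φ i ⬝ᵥ φ i ≤ Lφ ^ 2 := by
    intro i hi
    have h1 := hφ i hi
    have h2 : Real.sqrt (φ i ⬝ᵥ φ i) ^ 2 = φ i ⬝ᵥ φ i := Real.sq_sqrt (hdp _)
    nlinarith [Real.sqrt_nonneg (φ i ⬝ᵥ φ i)]
  have hposdef : ∀ i, (Sig i).PosDef := by
    intro i
    rw [hSig i]
    have h1 : (lam • (1 : Matrix (Fin d) (Fin d) ℝ)).PosDef := by
      rw [Matrix.smul_one_eq_diagonal]
      exact Matrix.posDef_diagonal_iff.mpr fun _ => hlam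
    exact h1.add_posSemidef (psd_sum d _ φ)
  set x : ℕ → ℝ := fun i => φ i ⬝ᵥ ((Sig i)⁻¹ *ᵥ φ i) with hxdef
  have hx0 : ∀ i, 0 ≤ x i := by
    intro i
    have := ((hposdef i).inv).posSemidef.dotProduct_mulVec_nonneg (φ i)
    simpa using this
  have h1x : ∀ i, (0:ℝ) < 1 + x i := fun i => by linarith [hx0 i]
  -- determinant formula
  have hdet : ∀ n : ℕ, (Sig (n+1)).det = lam ^ d * ∏ i ∈ Finset.Icc 1 n, (1 + x i) := by
    intro n
    induction n with
    | zero =>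
      simp only [Finset.Icc_self, Nat.zero_add]
      rw [hSig 1]
      simp [Matrix.det_smul]
    | succ m ih =>
      have hstep : Sig (m+2) = Sig (m+1) + Matrix.vecMulVec (φ (m+1)) (φ (m+1)) := by
        rw [hSig (m+2), hSig (m+1)]
        have : Finset.Icc 1 (m+2-1) = insert (m+1) (Finset.Icc 1 (m+1-1)) := by
          ext j
          simp only [Finset.mem_Icc, Finset.mem_insert]
          omega
        rw [this, Finset.sum_insert (by simp)]
        ring_nf
        abel
      rw [hstep, det_lemma d _ (isUnit_iff_ne_zero.mpr (ne_of_gt (hposdef (m+1)).det_pos)) _,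
        ih]
      have : Finset.Icc 1 (m+1) = insert (m+1) (Finset.Icc 1 m) := by
        ext j
        simp only [Finset.mem_Icc, Finset.mem_insert]
        omega
      rw [this, Finset.prod_insert (by simp)]
      ring
  -- quadratic form bound for Sig (k+1)
  set c : ℝ := lam + k * Lφ ^ 2 with hcdef
  have hc0 : 0 < c := by
    have : (0:ℝ) ≤ k * Lφ ^ 2 := by positivity
    linarith
  have hquad : ∀ y : Fin d → ℝ, y ⬝ᵥ (Sig (k+1) *ᵥ y) ≤ c * (y ⬝ᵥ y) := by
    intro y
    rw [hSig (k+1)]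
    rw [Matrix.add_mulVec, dotProduct_add, Matrix.smul_mulVec, Matrix.one_mulVec,
      dotProduct_smul]
    have hsum : y ⬝ᵥ ((∑ j ∈ Finset.Icc 1 (k+1-1), Matrix.vecMulVec (φ j) (φ j)) *ᵥ y)
        = ∑ j ∈ Finset.Icc 1 k, (φ j ⬝ᵥ y) ^ 2 := by
      simp only [Nat.add_sub_cancel]
      have hmv : ((∑ j ∈ Finset.Icc 1 k, Matrix.vecMulVec (φ j) (φ j)) *ᵥ y)
          = ∑ j ∈ Finset.Icc 1 k, (Matrix.vecMulVec (φ j) (φ j) *ᵥ y) := by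
        induction (Finset.Icc 1 k) using Finset.induction with
        | empty => simp [Matrix.zero_mulVec]
        | insert _ _ h ih =>
          rw [Finset.sum_insert h, Finset.sum_insert h, Matrix.add_mulVec, ih]
      rw [hmv]
      calc y ⬝ᵥ ∑ j ∈ Finset.Icc 1 k, (Matrix.vecMulVec (φ j) (φ j) *ᵥ y)
          = ∑ j ∈ Finset.Icc 1 k, y ⬝ᵥ (Matrix.vecMulVec (φ j) (φ j) *ᵥ y) := by
            simp only [dotProduct, Finset.sum_apply, Finset.mul_sum]
            exact Finset.sum_comm
        _ = ∑ j ∈ Finset.Icc 1 k, (φ j ⬝ᵥ y) ^ 2 :=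
            Finset.sum_congr rfl fun j _ => quad_vmv d (φ j) y
    rw [hsum]
    have hbound : ∑ j ∈ Finset.Icc 1 k, (φ j ⬝ᵥ y) ^ 2 ≤ k * Lφ ^ 2 * (y ⬝ᵥ y) := by
      calc ∑ j ∈ Finset.Icc 1 k, (φ j ⬝ᵥ y) ^ 2
          ≤ ∑ j ∈ Finset.Icc 1 k, Lφ ^ 2 * (y ⬝ᵥ y) := by
            apply Finset.sum_le_sum
            intro j hj
            have hcs : (φ j ⬝ᵥ y) ^ 2 ≤ (φ j ⬝ᵥ φ j) * (y ⬝ᵥ y) := by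
              have := Finset.sum_mul_sq_le_sq_mul_sq Finset.univ (φ j) y
              simpa [dotProduct, sq] using this
            have := hL2 j hj
            nlinarith [hdp y]
        _ = k * Lφ ^ 2 * (y ⬝ᵥ y) := by
            rw [Finset.sum_const, Nat.card_Icc]
            simp [Nat.add_sub_cancel]
            ring
    have := hdp y
    simp only [smul_eq_mul]
    nlinarith
  -- eigenvalue bound for Sig (k+1)
  have hherm : (Sig (k+1)).IsHermitian := (hposdef (k+1)).isHermitian
  have heig_pos : ∀ i, 0 < hherm.eigenvalues i := (hposdef (k+1)).eigenvalues_pos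
  have heig_le : ∀ i, hherm.eigenvalues i ≤ c := by
    intro i
    have hv := hherm.eigenvalues_eq i
    set w : Fin d → ℝ := ⇑(hherm.eigenvectorBasis i) with hw
    have hnorm : ‖hherm.eigenvectorBasis i‖ = 1 := hherm.eigenvectorBasis.orthonormal.1 i
    have hvv : w ⬝ᵥ w = 1 := by
      have h1 : (inner ℝ (hherm.eigenvectorBasis i) (hherm.eigenvectorBasis i) : ℝ)
          = ‖hherm.eigenvectorBasis i‖ ^ 2 := real_inner_self_eq_norm_sq _
      rw [hnorm, one_pow] at h1
      have h2 : (inner ℝ (hherm.eigenvectorBasis i) (hherm.eigenvectorBasis i) : ℝ)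
          = w ⬝ᵥ w := by
        rw [PiLp.inner_apply]
        simp [dotProduct, hw, RCLike.inner_apply, sq]
      rw [← h2, h1]
    have hv' : hherm.eigenvalues i = w ⬝ᵥ (Sig (k+1) *ᵥ w) := by
      simpa [hw] using hv
    rw [hv']
    have := hquad w
    rw [hvv, mul_one] at this
    exact this
  -- log det bound
  have hdetle : Real.log ((Sig (k+1)).det) ≤ d * Real.log c := by
    have hdeteq : (Sig (k+1)).det = ∏ i, hherm.eigenvalues i := by
      have := hherm.det_eq_prod_eigenvalues
      simpa using this
    rw [hdeteq, Real.log_prod (fun i _ => ne_of_gt (heig_pos i))]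
    calc ∑ i, Real.log (hherm.eigenvalues i) ≤ ∑ _i : Fin d, Real.log c := by
          apply Finset.sum_le_sum
          intro i _
          exact Real.log_le_log (heig_pos i) (heig_le i)
      _ = d * Real.log c := by simp [mul_comm]
  -- put things together
  have hprodpos : 0 < ∏ i ∈ Finset.Icc 1 k, (1 + x i) :=
    Finset.prod_pos fun i _ => h1x i
  have hlogprod : Real.log (∏ i ∈ Finset.Icc 1 k, (1 + x i))
      = ∑ i ∈ Finset.Icc 1 k, Real.log (1 + x i) :=
    Real.log_prod fun i _ => ne_of_gt (h1x i)
  have hdetlog : Real.log ((Sig (k+1)).det)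
      = d * Real.log lam + ∑ i ∈ Finset.Icc 1 k, Real.log (1 + x i) := by
    rw [hdet k, Real.log_mul (by positivity) (ne_of_gt hprodpos), Real.log_pow, hlogprod]
  have hsumlog : ∑ i ∈ Finset.Icc 1 k, Real.log (1 + x i)
      ≤ d * Real.log c - d * Real.log lam := by
    have := hdetle
    rw [hdetlog] at this
    linarith
  calc ∑ i ∈ Finset.Icc 1 k, min 1 (x i)
      ≤ ∑ i ∈ Finset.Icc 1 k, 2 * Real.log (1 + x i) :=
        Finset.sum_le_sum fun i _ => min_le_two_log (x i) (hx0 i)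
    _ = 2 * ∑ i ∈ Finset.Icc 1 k, Real.log (1 + x i) := by rw [Finset.mul_sum]
    _ ≤ 2 * (d * Real.log c - d * Real.log lam) := by linarith
    _ = 2 * d * Real.log (c / lam) := by
        rw [Real.log_div (ne_of_gt hc0) (ne_of_gt hlam)]
        ring
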